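/- If d = 4s² with s an odd positive integer, then there are at most 3 pairwise mutually unbiased orthonormal bases of R^d. -/

import Mathlib

/-- If `d = 4s²` with `s` an odd positive integer, then there are at most 3
pairwise mutually unbiased orthonormal bases of `ℝ^d`. -/
theorem at_most_three_real_MUBs
    (s : ℕ) (hs : Odd s) (hpos : 0 < s)
    (m : ℕ) (B : Fin m → Fin (4 * s^2) → (Fin (4 * s^2) → ℝ))
    (horth : ∀ a i j, ∑ k, B a i k * B a j k = if i = j then 1 else 0)
    (hunb : ∀ a a', a ≠ a' →
      ∀ i j, |∑ k, B a i k * B a' j k| = 1 / Real.sqrt (4 * s^2)) :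
    m ≤ 3 := by
  by_contra hm
  push_neg at hm
  have h4 : 4 ≤ m := hm
  have hsR : (0:ℝ) < (s:ℝ) := by exact_mod_cast hpos
  have hsqrt : Real.sqrt (4 * (s:ℝ)^2) = 2 * (s:ℝ) := by
    rw [show ((4:ℝ) * (s:ℝ)^2) = (2*(s:ℝ))^2 by ring]
    exact Real.sqrt_sq (by positivity)
  have hdpos : 0 < 4 * s^2 := by positivity
  set i0 : Fin (4*s^2) := ⟨0, hdpos⟩ with hi0
  have ha0 : (0:ℕ) < m := by omega
  have ha1 : (1:ℕ) < m := by omega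
  have ha2 : (2:ℕ) < m := by omega
  have ha3 : (3:ℕ) < m := by omega
  set a0 : Fin m := ⟨0, ha0⟩ with ha0def
  set a1 : Fin m := ⟨1, ha1⟩ with ha1def
  set a2 : Fin m := ⟨2, ha2⟩ with ha2def
  set a3 : Fin m := ⟨3, ha3⟩ with ha3def
  -- column orthonormality of basis a0
  have hcol : ∀ t u, (∑ k, B a0 k t * B a0 k u) = if t = u then 1 else 0 := by
    intro t u
    set M : Matrix (Fin (4*s^2)) (Fin (4*s^2)) ℝ := Matrix.of (fun i k => B a0 i k) with hM
    have h1 : M * M.transpose = 1 := by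
      ext i j
      simpa [Matrix.mul_apply, hM, Matrix.one_apply] using horth a0 i j
    have h2 : M.transpose * M = 1 := mul_eq_one_comm.mp h1
    have h3 := congrFun (congrFun h2 t) u
    simpa [Matrix.mul_apply, hM, Matrix.one_apply] using h3
  -- Parseval in the basis a0
  have hpars : ∀ (b c : Fin m),
      (∑ k, (∑ t, B b i0 t * B a0 k t) * (∑ t, B c i0 t * B a0 k t))
        = ∑ t, B b i0 t * B c i0 t := by
    intro b c
    have hexp : ∀ k : Fin (4*s^2),
        (∑ t, B b i0 t * B a0 k t) * (∑ t, B c i0 t * B a0 k t)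
          = ∑ t, ∑ u, (B b i0 t * B c i0 u) * (B a0 k t * B a0 k u) := by
      intro k
      rw [Finset.sum_mul_sum]
      exact Finset.sum_congr rfl fun t _ => Finset.sum_congr rfl fun u _ => by ring
    calc (∑ k, (∑ t, B b i0 t * B a0 k t) * (∑ t, B c i0 t * B a0 k t))
        = ∑ k, ∑ t, ∑ u, (B b i0 t * B c i0 u) * (B a0 k t * B a0 k u) :=
          Finset.sum_congr rfl fun k _ => hexp k
      _ = ∑ t, ∑ u, ∑ k, (B b i0 t * B c i0 u) * (B a0 k t * B a0 k u) := by
          rw [Finset.sum_comm]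
          exact Finset.sum_congr rfl fun t _ => Finset.sum_comm
      _ = ∑ t, ∑ u, (B b i0 t * B c i0 u) * (if t = u then 1 else 0) := by
          refine Finset.sum_congr rfl fun t _ => Finset.sum_congr rfl fun u _ => ?_
          rw [← Finset.mul_sum, hcol t u]
      _ = ∑ t, B b i0 t * B c i0 t := by
          refine Finset.sum_congr rfl fun t _ => ?_
          simp [mul_ite]
  -- the key modulus facts
  have key : ∀ b : Fin m, b ≠ a0 → ∀ k,
      |∑ t, B b i0 t * B a0 k t| = 1/(2*(s:ℝ)) := by
    intro b hb k
    have := hunb b a0 hb i0 k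
    rwa [hsqrt] at this
  set F : Fin m → Fin (4*s^2) → ℤ :=
    fun b k => if 0 ≤ ∑ t, B b i0 t * B a0 k t then 1 else -1 with hF
  have hFpm : ∀ b k, F b k = 1 ∨ F b k = -1 := by
    intro b k
    by_cases hc : 0 ≤ ∑ t, B b i0 t * B a0 k t <;> simp [hF, hc]
  have hFval : ∀ b, b ≠ a0 → ∀ k,
      ((F b k : ℝ)) = 2*(s:ℝ) * ∑ t, B b i0 t * B a0 k t := by
    intro b hb k
    have h := key b hb k
    by_cases hc : 0 ≤ ∑ t, B b i0 t * B a0 k t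
    · rw [abs_of_nonneg hc] at h
      rw [h]
      simp [hF, hc]
      field_simp
    · rw [abs_of_neg (lt_of_not_ge hc)] at h
      have h' : ∑ t, B b i0 t * B a0 k t = -(1/(2*(s:ℝ))) := by linarith
      rw [h']
      simp [hF, hc]
      field_simp
  -- the inner sums are ±2s
  have hS : ∀ b c : Fin m, b ≠ a0 → c ≠ a0 → b ≠ c →
      (∑ k, F b k * F c k) = 2*(s:ℤ) ∨ (∑ k, F b k * F c k) = -(2*(s:ℤ)) := by
    intro b c hb hc hbc
    have h1 : ((∑ k, F b k * F c k : ℤ) : ℝ)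
        = 4*(s:ℝ)^2 * ∑ t, B b i0 t * B c i0 t := by
      push_cast
      rw [← hpars b c, Finset.mul_sum]
      refine Finset.sum_congr rfl fun k _ => ?_
      rw [hFval b hb k, hFval c hc k]; ring
    have h2 : |∑ t, B b i0 t * B c i0 t| = 1/(2*(s:ℝ)) := by
      have := hunb b c hbc i0 i0
      rwa [hsqrt] at this
    have h3 : |((∑ k, F b k * F c k : ℤ) : ℝ)| = 2*(s:ℝ) := by
      rw [h1, abs_mul, h2, abs_of_nonneg (by positivity : (0:ℝ) ≤ 4*(s:ℝ)^2)]
      field_simp; ring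
    rcases (abs_eq (by positivity : (0:ℝ) ≤ 2*(s:ℝ))).mp h3 with h | h
    · left; exact_mod_cast h
    · right; exact_mod_cast h
  -- mod 4: each sum is ≡ 2
  obtain ⟨t, ht⟩ := hs
  have hseq : (2*(s:ℤ)) = 4*(t:ℤ) + 2 := by omega
  have hmod : ∀ b c : Fin m, b ≠ a0 → c ≠ a0 → b ≠ c →
      ((∑ k, F b k * F c k : ℤ) : ZMod 4) = 2 := by
    intro b c hb hc hbc
    rcases hS b c hb hc hbc with h | h
    · rw [h, hseq]
      push_cast
      rw [show ((4:ZMod 4)) = 0 by decide]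
      ring
    · rw [h, hseq]
      push_cast
      rw [show ((4:ZMod 4)) = 0 by decide]
      ring_nf
      rw [show ((-2:ZMod 4)) = 2 by decide]
  -- mod 4: the combined sum is ≡ 0
  have hzero : (((∑ k, F a1 k * F a2 k) + (∑ k, F a1 k * F a3 k)
      + (∑ k, F a2 k * F a3 k) : ℤ) : ZMod 4) = 0 := by
    have hcomb : ((∑ k, F a1 k * F a2 k) + (∑ k, F a1 k * F a3 k)
        + (∑ k, F a2 k * F a3 k) : ℤ)
        = ∑ k, (F a1 k * F a2 k + F a1 k * F a3 k + F a2 k * F a3 k) := by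
      rw [Finset.sum_add_distrib, Finset.sum_add_distrib]
    rw [hcomb]
    push_cast
    have hterm : ∀ k : Fin (4*s^2),
        ((F a1 k : ZMod 4) * (F a2 k : ZMod 4) + (F a1 k : ZMod 4) * (F a3 k : ZMod 4)
          + (F a2 k : ZMod 4) * (F a3 k : ZMod 4)) = 3 := by
      intro k
      rcases hFpm a1 k with h1 | h1 <;> rcases hFpm a2 k with h2 | h2 <;>
        rcases hFpm a3 k with h3 | h3 <;> rw [h1, h2, h3] <;> decide
    rw [Finset.sum_congr rfl fun k _ => hterm k, Finset.sum_const,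
      Finset.card_univ, Fintype.card_fin, nsmul_eq_mul]
    push_cast
    rw [show ((4:ZMod 4)) = 0 by decide]
    ring
  have hne1 : a1 ≠ a0 := by simp [ha0def, ha1def, Fin.ext_iff]
  have hne2 : a2 ≠ a0 := by simp [ha0def, ha2def, Fin.ext_iff]
  have hne3 : a3 ≠ a0 := by simp [ha0def, ha3def, Fin.ext_iff]
  have hne12 : a1 ≠ a2 := by simp [ha1def, ha2def, Fin.ext_iff]
  have hne13 : a1 ≠ a3 := by simp [ha1def, ha3def, Fin.ext_iff]
  have hne23 : a2 ≠ a3 := by simp [ha2def, ha3def, Fin.ext_iff]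
  have e12 := hmod a1 a2 hne1 hne2 hne12
  have e13 := hmod a1 a3 hne1 hne3 hne13
  have e23 := hmod a2 a3 hne2 hne3 hne23
  rw [Int.cast_add, Int.cast_add, e12, e13, e23] at hzero
  revert hzero
  decide
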